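/- arXiv:1001.2864 — 3 statements merged into one kernel-verified Lean document; each statement's English description precedes it below -/
import Mathlib

section
/- Let ε₁, ε₂, ε₃ > 0. Then there exist δ > 0 and ε > 0 such that the following holds: for every finite set U and all probability distributions p, q, r, s on U satisfying (i) d(p,q) ≥ ε₁, (ii) p(u) ≥ ε₂ and q(u) ≥ ε₃ for all u ∈ U, and (iii) d(p,r) < δ and d(p,s) < δ, one has ∑_{u ∈ U} r(u)·log(s(u)/q(u)) ≥ ε. -/
set_option maxHeartbeats 1000000 in
lemma key_pointwise (a b : ℝ) (ha : 0 < a) (hb : 0 < b) :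
    a - b + (Real.sqrt a - Real.sqrt b)^2 ≤ a * Real.log (a / b) := by
  have hsa : Real.sqrt a ^ 2 = a := Real.sq_sqrt ha.le
  have hsb : Real.sqrt b ^ 2 = b := Real.sq_sqrt hb.le
  have hsa0 : 0 < Real.sqrt a := Real.sqrt_pos.2 ha
  have hsb0 : 0 < Real.sqrt b := Real.sqrt_pos.2 hb
  have h1 : Real.log (Real.sqrt b / Real.sqrt a) ≤ Real.sqrt b / Real.sqrt a - 1 :=
    Real.log_le_sub_one_of_pos (by positivity)
  have hlog : Real.log (a / b) = 2 * Real.log (Real.sqrt a) - 2 * Real.log (Real.sqrt b) := by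
    rw [Real.log_div ha.ne' hb.ne', Real.log_sqrt ha.le, Real.log_sqrt hb.le]; ring
  have h2 : Real.log (Real.sqrt b / Real.sqrt a)
      = Real.log (Real.sqrt b) - Real.log (Real.sqrt a) :=
    Real.log_div hsb0.ne' hsa0.ne'
  have h4 : a * (Real.sqrt b / Real.sqrt a - 1) = Real.sqrt a * Real.sqrt b - a := by
    field_simp
    nlinarith [hsa, hsb]
  have h5 := mul_le_mul_of_nonneg_left h1 ha.le
  rw [hlog]
  rw [h2] at h5
  rw [h4] at h5
  nlinarith [h5]

set_option maxHeartbeats 1000000 in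
/-- Lemma 1 of the paper: for any ε₁, ε₂, ε₃ > 0 there exist δ > 0 and ε > 0 such that
for every finite set `U` and probability distributions `p, q, r, s` on `U` with
`d(p,q) ≥ ε₁`, `p(u) ≥ ε₂` and `q(u) ≥ ε₃` for all `u`, and `d(p,r) < δ`, `d(p,s) < δ`,
one has `∑ u, r u * log (s u / q u) ≥ ε`. -/
theorem bayesian_consistency_key_lemma
    (ε₁ ε₂ ε₃ : ℝ) (hε₁ : 0 < ε₁) (hε₂ : 0 < ε₂) (hε₃ : 0 < ε₃) :
    ∃ δ > (0 : ℝ), ∃ ε > (0 : ℝ),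
      ∀ (U : Type) [Fintype U] (p q r s : U → ℝ),
        (∀ u, 0 ≤ p u) → (∑ u, p u) = 1 →
        (∀ u, 0 ≤ q u) → (∑ u, q u) = 1 →
        (∀ u, 0 ≤ r u) → (∑ u, r u) = 1 →
        (∀ u, 0 ≤ s u) → (∑ u, s u) = 1 →
        ε₁ ≤ (∑ u, |p u - q u|) →
        (∀ u, ε₂ ≤ p u) → (∀ u, ε₃ ≤ q u) →
        (∑ u, |p u - r u|) < δ → (∑ u, |p u - s u|) < δ →
        ε ≤ ∑ u, r u * Real.log (s u / q u) := by
  set M : ℝ := |Real.log (ε₂/2)| + |Real.log ε₃| + 1 with hMdef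
  have hM : 0 < M := by positivity
  set K : ℝ := ε₁^2 * ε₂^2 / 4 with hKdef
  have hK : 0 < K := by positivity
  have hden : 0 < 2*(M + 2/ε₂) := by positivity
  refine ⟨min (ε₂/2) (K / (2*(M + 2/ε₂))), by positivity, K/2, by positivity, ?_⟩
  set δ := min (ε₂/2) (K / (2*(M + 2/ε₂))) with hδdef
  have hδε₂ : δ ≤ ε₂/2 := min_le_left _ _
  have hδK : δ * (2*(M + 2/ε₂)) ≤ K := by
    have h := min_le_right (ε₂/2) (K / (2*(M + 2/ε₂)))
    exact (le_div_iff₀ hden).1 h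
  intro U _ p q r s hp hpsum hq hqsum hr hrsum hs hssum hd hpε hqε hpr hps
  clear_value δ
  clear_value K
  clear_value M
  -- univ nonempty
  have huniv : (Finset.univ : Finset U).Nonempty := by
    apply Finset.nonempty_of_sum_ne_zero (f := p)
    rw [hpsum]; exact one_ne_zero
  -- pointwise ≤ 1
  have hle1 : ∀ (f : U → ℝ), (∀ u, 0 ≤ f u) → (∑ u, f u) = 1 → ∀ u, f u ≤ 1 := by
    intro f hf hsum u
    calc f u ≤ ∑ v, f v := Finset.single_le_sum (fun v _ => hf v) (Finset.mem_univ u)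
    _ = 1 := hsum
  have hp1 := hle1 p hp hpsum
  have hq1 := hle1 q hq hqsum
  have hs1 := hle1 s hs hssum
  -- pointwise distance bounds
  have hprpt : ∀ u, |p u - r u| < δ := fun u =>
    lt_of_le_of_lt (Finset.single_le_sum (f := fun v => |p v - r v|)
      (fun v _ => abs_nonneg _) (Finset.mem_univ u)) hpr
  have hpspt : ∀ u, |p u - s u| < δ := fun u =>
    lt_of_le_of_lt (Finset.single_le_sum (f := fun v => |p v - s v|)
      (fun v _ => abs_nonneg _) (Finset.mem_univ u)) hps
  have hppos : ∀ u, 0 < p u := fun u => lt_of_lt_of_le hε₂ (hpε u)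
  have hqpos : ∀ u, 0 < q u := fun u => lt_of_lt_of_le hε₃ (hqε u)
  have hslb : ∀ u, ε₂/2 ≤ s u := by
    intro u
    have h := (abs_lt.1 (hpspt u)).2
    have := hpε u
    linarith
  have hspos : ∀ u, 0 < s u := fun u => lt_of_lt_of_le (by positivity) (hslb u)
  -- card bound
  have hcard : (Fintype.card U : ℝ) * ε₂ ≤ 1 := by
    have h : ∑ _u : U, ε₂ ≤ ∑ u, p u := Finset.sum_le_sum (fun u _ => hpε u)
    rw [Finset.sum_const, Finset.card_univ, nsmul_eq_mul, hpsum] at h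
    exact h
  -- witness u₀
  obtain ⟨u₀, hu₀⟩ : ∃ u₀, ε₁ * ε₂ ≤ |p u₀ - q u₀| := by
    by_contra h
    push_neg at h
    have hlt : ∑ u, |p u - q u| < ∑ _u : U, ε₁ * ε₂ :=
      Finset.sum_lt_sum_of_nonempty huniv (fun u _ => h u)
    rw [Finset.sum_const, Finset.card_univ, nsmul_eq_mul] at hlt
    nlinarith [hcard, hd]
  -- KL lower bound
  have hKL : K ≤ ∑ u, p u * Real.log (p u / q u) := by
    have h1 : ∀ u ∈ Finset.univ,
        p u - q u + (Real.sqrt (p u) - Real.sqrt (q u))^2 ≤ p u * Real.log (p u / q u) :=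
      fun u _ => key_pointwise _ _ (hppos u) (hqpos u)
    have h2 := Finset.sum_le_sum h1
    rw [Finset.sum_add_distrib, Finset.sum_sub_distrib, hpsum, hqsum] at h2
    have h3 : (Real.sqrt (p u₀) - Real.sqrt (q u₀))^2
        ≤ ∑ u, (Real.sqrt (p u) - Real.sqrt (q u))^2 :=
      Finset.single_le_sum (f := fun u => (Real.sqrt (p u) - Real.sqrt (q u))^2)
        (fun u _ => sq_nonneg _) (Finset.mem_univ u₀)
    have hsqp : Real.sqrt (p u₀) ^ 2 = p u₀ := Real.sq_sqrt (hp u₀)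
    have hsqq : Real.sqrt (q u₀) ^ 2 = q u₀ := Real.sq_sqrt (hq u₀)
    have hsp1 : Real.sqrt (p u₀) ≤ 1 := Real.sqrt_le_one.2 (hp1 u₀)
    have hsq1 : Real.sqrt (q u₀) ≤ 1 := Real.sqrt_le_one.2 (hq1 u₀)
    have h4 : (p u₀ - q u₀)^2 / 4 ≤ (Real.sqrt (p u₀) - Real.sqrt (q u₀))^2 := by
      set x := Real.sqrt (p u₀) with hxdef
      set y := Real.sqrt (q u₀) with hydef
      have h4a : (x + y)^2 ≤ 4 := by
        nlinarith [Real.sqrt_nonneg (p u₀), Real.sqrt_nonneg (q u₀)]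
      have h4b : 0 ≤ (x - y)^2 * (4 - (x + y)^2) :=
        mul_nonneg (sq_nonneg _) (by linarith)
      rw [← hsqp, ← hsqq]
      nlinarith [h4b]
    have h5 : (ε₁ * ε₂)^2 ≤ (p u₀ - q u₀)^2 := by
      rw [← sq_abs (p u₀ - q u₀)]
      exact pow_le_pow_left₀ (by positivity) hu₀ 2
    rw [hKdef]
    linarith [h2, h3, h4, h5]
  -- decomposition
  have hdecomp : ∑ u, r u * Real.log (s u / q u)
      = (∑ u, p u * Real.log (p u / q u))
        + ∑ u, ((r u - p u) * (Real.log (s u) - Real.log (q u))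
                + p u * (Real.log (s u) - Real.log (p u))) := by
    rw [← Finset.sum_add_distrib]
    apply Finset.sum_congr rfl
    intro u _
    rw [Real.log_div (hspos u).ne' (hqpos u).ne', Real.log_div (hppos u).ne' (hqpos u).ne']
    ring
  -- error bounds
  have herr : ∀ u ∈ Finset.univ,
      -(M * |p u - r u| + (2/ε₂) * |p u - s u|)
        ≤ (r u - p u) * (Real.log (s u) - Real.log (q u))
            + p u * (Real.log (s u) - Real.log (p u)) := by
    intro u _
    -- |log s u| ≤ |log (ε₂/2)|
    have hls : |Real.log (s u)| ≤ |Real.log (ε₂/2)| := by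
      rw [abs_le]
      constructor
      · calc -|Real.log (ε₂/2)| ≤ Real.log (ε₂/2) := neg_abs_le _
        _ ≤ Real.log (s u) := Real.log_le_log (by positivity) (hslb u)
      · calc Real.log (s u) ≤ 0 := Real.log_nonpos (hs u) (hs1 u)
        _ ≤ |Real.log (ε₂/2)| := abs_nonneg _
    have hlq : |Real.log (q u)| ≤ |Real.log ε₃| := by
      rw [abs_le]
      constructor
      · calc -|Real.log ε₃| ≤ Real.log ε₃ := neg_abs_le _
        _ ≤ Real.log (q u) := Real.log_le_log hε₃ (hqε u)
      · calc Real.log (q u) ≤ 0 := Real.log_nonpos (hq u) (hq1 u)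
        _ ≤ |Real.log ε₃| := abs_nonneg _
    have hbd1 : -(M * |p u - r u|) ≤ (r u - p u) * (Real.log (s u) - Real.log (q u)) := by
      have h1 : |(r u - p u) * (Real.log (s u) - Real.log (q u))| ≤ |p u - r u| * M := by
        rw [abs_mul, abs_sub_comm (r u) (p u)]
        apply mul_le_mul_of_nonneg_left _ (abs_nonneg _)
        calc |Real.log (s u) - Real.log (q u)| ≤ |Real.log (s u)| + |Real.log (q u)| :=
              abs_sub _ _
        _ ≤ M := by rw [hMdef]; linarith
      have h2 := neg_abs_le ((r u - p u) * (Real.log (s u) - Real.log (q u)))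
      linarith [h1, h2, mul_comm M (|p u - r u|)]
    have hbd2 : -((2/ε₂) * |p u - s u|) ≤ p u * (Real.log (s u) - Real.log (p u)) := by
      have hlip : Real.log (p u) - Real.log (s u) ≤ (2/ε₂) * |p u - s u| := by
        have h1 : Real.log (p u / s u) ≤ p u / s u - 1 :=
          Real.log_le_sub_one_of_pos (div_pos (hppos u) (hspos u))
        rw [Real.log_div (hppos u).ne' (hspos u).ne'] at h1
        have h2 : p u / s u - 1 = (p u - s u) / s u := by
          field_simp [(hspos u).ne']
        have h3 : (p u - s u) / s u ≤ |p u - s u| / (ε₂/2) :=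
          div_le_div₀ (abs_nonneg _) (le_abs_self _) (by positivity) (hslb u)
        have h4 : |p u - s u| / (ε₂/2) = (2/ε₂) * |p u - s u| := by
          field_simp
        rw [h2] at h1
        rw [h4] at h3
        linarith
      have hc : 0 ≤ (2/ε₂) * |p u - s u| := by positivity
      have hx : 0 ≤ Real.log (s u) - Real.log (p u) + (2/ε₂) * |p u - s u| := by linarith
      nlinarith [mul_nonneg (hp u) hx, hp1 u]
    linarith [hbd1, hbd2]
  have herrsum := Finset.sum_le_sum herr
  have herrsum' : -(M * (∑ u, |p u - r u|) + (2/ε₂) * (∑ u, |p u - s u|))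
      ≤ ∑ u, ((r u - p u) * (Real.log (s u) - Real.log (q u))
              + p u * (Real.log (s u) - Real.log (p u))) := by
    calc -(M * (∑ u, |p u - r u|) + (2/ε₂) * (∑ u, |p u - s u|))
        = ∑ u, (-(M * |p u - r u| + (2/ε₂) * |p u - s u|)) := by
          simp [Finset.sum_add_distrib, Finset.mul_sum, neg_add]
    _ ≤ _ := herrsum
  -- conclude
  rw [hdecomp]
  have hA : 0 ≤ ∑ u, |p u - r u| := Finset.sum_nonneg (fun u _ => abs_nonneg _)
  have hB : 0 ≤ ∑ u, |p u - s u| := Finset.sum_nonneg (fun u _ => abs_nonneg _)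
  have hMA : M * (∑ u, |p u - r u|) ≤ M * δ := mul_le_mul_of_nonneg_left hpr.le hM.le
  have hMB : (2/ε₂) * (∑ u, |p u - s u|) ≤ (2/ε₂) * δ :=
    mul_le_mul_of_nonneg_left hps.le (by positivity)
  have hexp : δ * (2*(M + 2/ε₂)) = 2*(M * δ + (2/ε₂) * δ) := by ring
  linarith [hKL, herrsum', hδK, hMA, hMB]
end

section
/- Let ε₁, ε₂, ε₃ > 0 and let δ > 0 satisfy δ < min(ε₁, ε₂). Define f(δ) := (1/2)(ε₁ − δ)² − 2δ·(|log(ε₂ − δ)| + |log ε₃|). Then for every finite set U and all probability distributions p, q, r, s on U satisfying (i) d(p,q) ≥ ε₁, (ii) p(u) ≥ ε₂ and q(u) ≥ ε₃ for all u ∈ U, and (iii) d(p,r) < δ and d(p,s) < δ, one has ∑_{u ∈ U} r(u)·log(s(u)/q(u)) ≥ f(δ). -/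
open Real Finset

lemma psi_hasDeriv {x : ℝ} (hx : 0 < x) :
    HasDerivAt (fun t : ℝ => (t + 1) * Real.log t - 2 * (t - 1))
      (Real.log x + (x + 1) * x⁻¹ - 2) x := by
  have h1 : HasDerivAt (fun t : ℝ => (t + 1) * Real.log t)
      (1 * Real.log x + (x + 1) * x⁻¹) x :=
    ((hasDerivAt_id x).add_const 1).mul (Real.hasDerivAt_log hx.ne')
  have h2 : HasDerivAt (fun t : ℝ => 2 * (t - 1)) 2 x := by
    simpa using ((hasDerivAt_id x).sub_const 1).const_mul 2
  have h3 := h1.sub h2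
  simp only [one_mul] at h3
  exact h3

lemma psi_mono : MonotoneOn (fun t : ℝ => (t + 1) * Real.log t - 2 * (t - 1)) (Set.Ioi 0) := by
  apply monotoneOn_of_deriv_nonneg (convex_Ioi 0)
  · apply ContinuousOn.sub
    · exact (continuousOn_id.add continuousOn_const).mul
        (Real.continuousOn_log.mono (by intro x hx; simpa using ne_of_gt hx))
    · fun_prop
  · intro x hx
    rw [interior_Ioi] at hx
    exact ((psi_hasDeriv hx).differentiableAt).differentiableWithinAt
  · intro x hx
    rw [interior_Ioi] at hx
    rw [(psi_hasDeriv hx).deriv]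
    have h := Real.one_sub_inv_le_log_of_pos hx
    have : (x + 1) * x⁻¹ = 1 + x⁻¹ := by
      rw [add_mul, mul_inv_cancel₀ hx.ne', one_mul]
    rw [this]
    linarith

lemma psi_nonneg {t : ℝ} (ht : 1 ≤ t) :
    0 ≤ (t + 1) * Real.log t - 2 * (t - 1) := by
  have := psi_mono (Set.mem_Ioi.2 one_pos) (Set.mem_Ioi.2 (lt_of_lt_of_le one_pos ht)) ht
  simpa using this

lemma psi_nonpos {t : ℝ} (ht0 : 0 < t) (ht : t ≤ 1) :
    (t + 1) * Real.log t - 2 * (t - 1) ≤ 0 := by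
  have := psi_mono (Set.mem_Ioi.2 ht0) (Set.mem_Ioi.2 one_pos) ht
  simpa using this

lemma g_hasDeriv {x : ℝ} (hx : 0 < x) :
    HasDerivAt (fun t : ℝ => (2 * t + 4) * (t * Real.log t - t + 1) - 3 * (t - 1) ^ 2)
      (4 * ((x + 1) * Real.log x - 2 * (x - 1))) x := by
  have h1 : HasDerivAt (fun t : ℝ => (2 * t + 4) * (t * Real.log t - t + 1))
      (2 * (x * Real.log x - x + 1) + (2 * x + 4) * (Real.log x + 1 - 1)) x := by
    have ha : HasDerivAt (fun t : ℝ => 2 * t + 4) 2 x := by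
      simpa using ((hasDerivAt_id x).const_mul 2).add_const 4
    have hb : HasDerivAt (fun t : ℝ => t * Real.log t - t + 1) (Real.log x + 1 - 1) x := by
      simpa using ((Real.hasDerivAt_mul_log hx.ne').sub (hasDerivAt_id x)).add_const 1
    exact ha.mul hb
  have h2 : HasDerivAt (fun t : ℝ => 3 * (t - 1) ^ 2) (3 * (2 * (x - 1))) x := by
    simpa using (((hasDerivAt_id x).sub_const 1).pow 2).const_mul 3
  have : HasDerivAt (fun t : ℝ => (2 * t + 4) * (t * Real.log t - t + 1) - 3 * (t - 1) ^ 2)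
      (2 * (x * Real.log x - x + 1) + (2 * x + 4) * (Real.log x + 1 - 1) - 3 * (2 * (x - 1))) x :=
    h1.sub h2
  convert this using 1
  ring

lemma g_nonneg {t : ℝ} (ht : 0 < t) :
    0 ≤ (2 * t + 4) * (t * Real.log t - t + 1) - 3 * (t - 1) ^ 2 := by
  set g : ℝ → ℝ := fun t => (2 * t + 4) * (t * Real.log t - t + 1) - 3 * (t - 1) ^ 2 with hg
  have h1 : g 1 = 0 := by simp [hg]
  rcases le_or_gt 1 t with h | h
  · have hmono : MonotoneOn g (Set.Icc 1 t) := by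
      apply monotoneOn_of_deriv_nonneg (convex_Icc 1 t)
      · intro x hx
        exact ((g_hasDeriv (lt_of_lt_of_le one_pos hx.1)).continuousAt).continuousWithinAt
      · intro x hx
        rw [interior_Icc] at hx
        exact ((g_hasDeriv (lt_trans one_pos hx.1)).differentiableAt).differentiableWithinAt
      · intro x hx
        rw [interior_Icc] at hx
        rw [(g_hasDeriv (lt_trans one_pos hx.1)).deriv]
        have := psi_nonneg (le_of_lt hx.1)
        linarith
    have := hmono (Set.left_mem_Icc.2 h) (Set.right_mem_Icc.2 h) h
    rw [h1] at this; exact this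
  · have hmono : AntitoneOn g (Set.Icc t 1) := by
      apply antitoneOn_of_deriv_nonpos (convex_Icc t 1)
      · intro x hx
        exact ((g_hasDeriv (lt_of_lt_of_le ht hx.1)).continuousAt).continuousWithinAt
      · intro x hx
        rw [interior_Icc] at hx
        exact ((g_hasDeriv (lt_trans ht hx.1)).differentiableAt).differentiableWithinAt
      · intro x hx
        rw [interior_Icc] at hx
        rw [(g_hasDeriv (lt_trans ht hx.1)).deriv]
        have := psi_nonpos (lt_trans ht hx.1) (le_of_lt hx.2)
        linarith
    have := hmono (Set.left_mem_Icc.2 h.le) (Set.right_mem_Icc.2 h.le) h.le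
    rw [h1] at this; exact this

/-- Key pointwise inequality: `3(x-y)² ≤ (2x+4y)(x log(x/y) - x + y)`. -/
lemma key_xy {x y : ℝ} (hx : 0 < x) (hy : 0 < y) :
    3 * (x - y) ^ 2 ≤ (2 * x + 4 * y) * (x * Real.log (x / y) - x + y) := by
  have h := g_nonneg (div_pos hx hy)
  have h2 := mul_le_mul_of_nonneg_right (sub_nonneg.1 h) (sq_nonneg y)
  have e1 : 3 * (x / y - 1) ^ 2 * y ^ 2 = 3 * (x - y) ^ 2 := by
    field_simp
  have e2 : ((2 * (x / y) + 4) * (x / y * Real.log (x / y) - x / y + 1)) * y ^ 2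
      = (2 * x + 4 * y) * (x * Real.log (x / y) - x + y) := by
    have hxy : x / y * y = x := div_mul_cancel₀ x hy.ne'
    have hb : (2 * (x / y) + 4) * y = 2 * x + 4 * y := by
      rw [add_mul, mul_assoc, hxy]
    have hc : (x / y * Real.log (x / y) - x / y + 1) * y
        = x * Real.log (x / y) - x + y := by
      rw [add_mul, sub_mul, mul_right_comm, hxy, one_mul]
    calc (2 * (x / y) + 4) * (x / y * Real.log (x / y) - x / y + 1) * y ^ 2
        = ((2 * (x / y) + 4) * y) * ((x / y * Real.log (x / y) - x / y + 1) * y) := by ring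
      _ = (2 * x + 4 * y) * (x * Real.log (x / y) - x + y) := by rw [hb, hc]
  rw [e1, e2] at h2
  exact h2

/-- Discrete Pinsker inequality. -/
lemma pinsker_aux {U : Type} [Fintype U] (s q : U → ℝ)
    (hs : ∀ u, 0 < s u) (hq : ∀ u, 0 < q u)
    (hs1 : (∑ u, s u) = 1) (hq1 : (∑ u, q u) = 1) :
    (1 / 2) * (∑ u, |s u - q u|) ^ 2 ≤ ∑ u, s u * Real.log (s u / q u) := by
  set w : U → ℝ := fun u => (2 * s u + 4 * q u) / 3 with hw
  have hwpos : ∀ u, 0 < w u := fun u => by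
    have := hs u; have := hq u; simp only [hw]; positivity
  have hwsum : (∑ u, w u) = 2 := by
    simp only [hw]
    rw [← Finset.sum_div, Finset.sum_add_distrib, ← Finset.mul_sum, ← Finset.mul_sum,
      hs1, hq1]
    norm_num
  have cs := Finset.sum_mul_sq_le_sq_mul_sq Finset.univ
    (fun u => |s u - q u| / Real.sqrt (w u)) (fun u => Real.sqrt (w u))
  have e1 : ∀ u, |s u - q u| / Real.sqrt (w u) * Real.sqrt (w u) = |s u - q u| := by
    intro u
    exact div_mul_cancel₀ _ (ne_of_gt (Real.sqrt_pos.2 (hwpos u)))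
  have e2 : ∀ u, (Real.sqrt (w u)) ^ 2 = w u := fun u => Real.sq_sqrt (hwpos u).le
  have e3 : ∀ u, (|s u - q u| / Real.sqrt (w u)) ^ 2 = (s u - q u) ^ 2 / w u := by
    intro u
    rw [div_pow, sq_abs, e2]
  have hpt : ∀ u, (s u - q u) ^ 2 / w u ≤ s u * Real.log (s u / q u) - s u + q u := by
    intro u
    rw [div_le_iff₀ (hwpos u)]
    have := key_xy (hs u) (hq u)
    have h3 : (0:ℝ) < 3 := by norm_num
    calc (s u - q u) ^ 2 = 3 * (s u - q u) ^ 2 / 3 := by ring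
      _ ≤ (2 * s u + 4 * q u) * (s u * Real.log (s u / q u) - s u + q u) / 3 := by
          linarith
      _ = (s u * Real.log (s u / q u) - s u + q u) * w u := by
          simp only [hw]; ring
  have hsum2 : (∑ u, (s u - q u) ^ 2 / w u) ≤ ∑ u, s u * Real.log (s u / q u) := by
    have := Finset.sum_le_sum (s := Finset.univ) (fun u _ => hpt u)
    calc (∑ u, (s u - q u) ^ 2 / w u)
        ≤ ∑ u, (s u * Real.log (s u / q u) - s u + q u) := this
      _ = (∑ u, s u * Real.log (s u / q u)) - (∑ u, s u) + (∑ u, q u) := by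
          rw [Finset.sum_add_distrib, Finset.sum_sub_distrib]
      _ = ∑ u, s u * Real.log (s u / q u) := by rw [hs1, hq1]; ring
  simp only [e1, e3, e2] at cs
  rw [hwsum] at cs
  nlinarith [cs, hsum2]


/-- Quantitative form of Lemma 1: with `δ < min(ε₁, ε₂)` and
`f(δ) = (1/2)(ε₁ - δ)² - 2δ(|log(ε₂ - δ)| + |log ε₃|)`, the sum
`∑ u, r u * log (s u / q u)` is bounded below by `f(δ)`. -/
theorem bayesian_consistency_key_lemma_quantitative
    (ε₁ ε₂ ε₃ δ : ℝ) (hε₁ : 0 < ε₁) (hε₂ : 0 < ε₂) (hε₃ : 0 < ε₃)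
    (hδ : 0 < δ) (hδlt : δ < min ε₁ ε₂)
    (U : Type) [Fintype U] (p q r s : U → ℝ)
    (hp0 : ∀ u, 0 ≤ p u) (hp1 : (∑ u, p u) = 1)
    (hq0 : ∀ u, 0 ≤ q u) (hq1 : (∑ u, q u) = 1)
    (hr0 : ∀ u, 0 ≤ r u) (hr1 : (∑ u, r u) = 1)
    (hs0 : ∀ u, 0 ≤ s u) (hs1 : (∑ u, s u) = 1)
    (hpq : ε₁ ≤ (∑ u, |p u - q u|))
    (hpε₂ : ∀ u, ε₂ ≤ p u) (hqε₃ : ∀ u, ε₃ ≤ q u)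
    (hpr : (∑ u, |p u - r u|) < δ) (hps : (∑ u, |p u - s u|) < δ) :
    (1 / 2) * (ε₁ - δ) ^ 2 - 2 * δ * (|Real.log (ε₂ - δ)| + |Real.log ε₃|)
      ≤ ∑ u, r u * Real.log (s u / q u) := by
  have hδε₁ : δ < ε₁ := lt_of_lt_of_le hδlt (min_le_left _ _)
  have hδε₂ : δ < ε₂ := lt_of_lt_of_le hδlt (min_le_right _ _)
  set L : U → ℝ := fun u => Real.log (s u / q u) with hL
  set M : ℝ := |Real.log (ε₂ - δ)| + |Real.log ε₃| with hM
  have hMnn : 0 ≤ M := add_nonneg (abs_nonneg _) (abs_nonneg _)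
  -- basic pointwise bounds
  have habs : ∀ (f : U → ℝ) (u : U), |p u - f u| ≤ ∑ v, |p v - f v| :=
    fun f u => Finset.single_le_sum (f := fun v => |p v - f v|) (fun v _ => abs_nonneg _) (Finset.mem_univ u)
  have hsu : ∀ u, ε₂ - δ < s u := by
    intro u
    have h1 := (habs s u).trans_lt hps
    have h2 := le_abs_self (p u - s u)
    have h3 := hpε₂ u
    linarith
  have hspos : ∀ u, 0 < s u := fun u => lt_of_le_of_lt (by linarith) (hsu u)
  have hqpos : ∀ u, 0 < q u := fun u => lt_of_lt_of_le hε₃ (hqε₃ u)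
  have hsle1 : ∀ u, s u ≤ 1 := by
    intro u
    have := Finset.single_le_sum (f := s) (fun v _ => hs0 v) (Finset.mem_univ u)
    rwa [hs1] at this
  have hqle1 : ∀ u, q u ≤ 1 := by
    intro u
    have := Finset.single_le_sum (f := q) (fun v _ => hq0 v) (Finset.mem_univ u)
    rwa [hq1] at this
  -- |L u| ≤ M
  have hLbound : ∀ u, |L u| ≤ M := by
    intro u
    have hlog : L u = Real.log (s u) - Real.log (q u) :=
      Real.log_div (hspos u).ne' (hqpos u).ne'
    have hb1 : |Real.log (s u)| ≤ |Real.log (ε₂ - δ)| := by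
      have h1 : Real.log (s u) ≤ 0 := Real.log_nonpos (hs0 u) (hsle1 u)
      have h2 : Real.log (ε₂ - δ) ≤ Real.log (s u) :=
        Real.log_le_log (by linarith) (le_of_lt (hsu u))
      rw [abs_of_nonpos h1]
      linarith [neg_abs_le (Real.log (ε₂ - δ))]
    have hb2 : |Real.log (q u)| ≤ |Real.log ε₃| := by
      have h1 : Real.log (q u) ≤ 0 := Real.log_nonpos (hq0 u) (hqle1 u)
      have h2 : Real.log ε₃ ≤ Real.log (q u) := Real.log_le_log hε₃ (hqε₃ u)
      rw [abs_of_nonpos h1]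
      linarith [neg_abs_le (Real.log ε₃)]
    calc |L u| ≤ |Real.log (s u)| + |Real.log (q u)| := by
          rw [hlog]; exact abs_sub _ _
      _ ≤ M := add_le_add hb1 hb2
  -- d(s,q) ≥ ε₁ - δ
  have hsq : ε₁ - δ ≤ ∑ u, |s u - q u| := by
    have hsum := Finset.sum_le_sum (s := Finset.univ)
      (fun u _ => abs_sub_le (p u) (s u) (q u))
    rw [Finset.sum_add_distrib] at hsum
    linarith
  -- Pinsker
  have hpin := pinsker_aux s q hspos hqpos hs1 hq1
  have hKL : (1 / 2) * (ε₁ - δ) ^ 2 ≤ ∑ u, s u * L u := by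
    have h1 : (ε₁ - δ) ^ 2 ≤ (∑ u, |s u - q u|) ^ 2 :=
      pow_le_pow_left₀ (by linarith) hsq 2
    calc (1 / 2) * (ε₁ - δ) ^ 2 ≤ (1 / 2) * (∑ u, |s u - q u|) ^ 2 := by linarith
      _ ≤ ∑ u, s u * L u := hpin
  -- d(r,s) < 2δ
  have hrs : (∑ u, |r u - s u|) ≤ 2 * δ := by
    have hsum := Finset.sum_le_sum (s := Finset.univ)
      (fun u _ => abs_sub_le (r u) (p u) (s u))
    rw [Finset.sum_add_distrib] at hsum
    have : (∑ u, |r u - p u|) = ∑ u, |p u - r u| :=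
      Finset.sum_congr rfl (fun u _ => abs_sub_comm _ _)
    rw [this] at hsum
    linarith
  -- error term
  have herr : -(2 * δ * M) ≤ ∑ u, (r u - s u) * L u := by
    have hpt : ∀ u, -(|r u - s u| * M) ≤ (r u - s u) * L u := by
      intro u
      have h1 : |(r u - s u) * L u| ≤ |r u - s u| * M := by
        rw [abs_mul]
        exact mul_le_mul_of_nonneg_left (hLbound u) (abs_nonneg _)
      linarith [neg_abs_le ((r u - s u) * L u)]
    have hsum := Finset.sum_le_sum (s := Finset.univ) (fun u _ => hpt u)
    have hneg : (∑ i : U, -(|r i - s i| * M)) = -((∑ i : U, |r i - s i|) * M) := by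
      rw [Finset.sum_mul, Finset.sum_neg_distrib]
    rw [hneg] at hsum
    have h2 : (∑ u, |r u - s u|) * M ≤ 2 * δ * M :=
      mul_le_mul_of_nonneg_right hrs hMnn
    linarith
  -- combine
  have hsplit : (∑ u, r u * L u) = (∑ u, s u * L u) + ∑ u, (r u - s u) * L u := by
    rw [← Finset.sum_add_distrib]
    exact Finset.sum_congr rfl (fun u _ => by ring)
  rw [hsplit]
  clear_value L M
  linarith
end

section
/- Statistical consistency of the MAP estimator: Let U be a finite set and A a finite set. For each a ∈ A, let Θ(a) be a nonempty open subset of a Euclidean space ℝ^{d_a}, let θ ↦ p_{(a,θ)} assign to each θ ∈ Θ(a) a probability distribution on U, let π be a probability distribution on A, and let f_a be a probability density on Θ(a). Assume for all a ∈ A: (C1) π(a) > 0; (C2) f_a is continuous, bounded, and strictly positive on Θ(a); (C3) θ ↦ p_{(a,θ)} is continuous on Θ(a) and p_{(a,θ)}(u) > 0 for all θ ∈ Θ(a) and u ∈ U; (C4) for all θ ∈ Θ(a) and all b ∈ A with b ≠ a, inf_{θ' ∈ Θ(b)} d(p_{(a,θ)}, p_{(b,θ')}) > 0. For u = (u₁,…,u_k)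 ∈ U^k and b ∈ A, let m_b(u) := π(b) · ∫_{Θ(b)} ∏_{j=1}^k p_{(b,θ')}(u_j) · f_b(θ') dθ' (the posterior score of b). Let P(a, θ, k) be the probability, under k i.i.d. draws u from p_{(a,θ)}, that m_a(u) > m_b(u) for every b ≠ a (i.e. the MAP estimator uniquely and correctly selects a). Then for every a ∈ A and every θ ∈ Θ(a), lim_{k → ∞} P(a, θ, k) = 1. -/
namespace MapConsist

open Finset Real MeasureTheory

variable {U : Type} [Fintype U]

lemma sum_pi_prod {k : ℕ} (G : Fin k → U → ℝ) :
    ∑ u : Fin k → U, ∏ j, G j (u j) = ∏ j, ∑ x, G j x := by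
  rw [← Fintype.piFinset_univ, ← Finset.prod_univ_sum]

lemma sum_pi_prod_one {k : ℕ} (q : U → ℝ) (hq1 : ∑ x, q x = 1) :
    ∑ u : Fin k → U, ∏ j, q (u j) = 1 := by
  rw [sum_pi_prod]; simp [hq1]

lemma sum_succ_decomp {n : ℕ} (F : (Fin (n+1) → U) → ℝ) :
    ∑ u : Fin (n+1) → U, F u = ∑ x : U, ∑ w : Fin n → U, F (Fin.cons x w : Fin (n+1) → U) := by
  have h := Fintype.sum_equiv (Fin.consEquiv (fun _ : Fin (n+1) => U))
      (fun xw : U × (Fin n → U) => F (Fin.cons xw.1 xw.2)) F (fun xw => rfl)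
  rw [← h, Fintype.sum_prod_type]

lemma moment_one {k : ℕ} (q c : U → ℝ) (hq1 : ∑ x, q x = 1) :
    ∑ u : Fin k → U, (∏ j, q (u j)) * (∑ j, c (u j)) = k * ∑ x, q x * c x := by
  induction k with
  | zero => simp
  | succ n ih =>
    rw [sum_succ_decomp]
    have key : ∀ x : U, ∑ w : Fin n → U,
        (∏ j : Fin (n+1), q ((Fin.cons x w : Fin (n+1) → U) j)) * (∑ j : Fin (n+1), c ((Fin.cons x w : Fin (n+1) → U) j))
        = q x * c x + q x * (n * ∑ y, q y * c y) := by
      intro x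
      have h1 : ∀ w : Fin n → U,
          (∏ j : Fin (n+1), q ((Fin.cons x w : Fin (n+1) → U) j)) * (∑ j : Fin (n+1), c ((Fin.cons x w : Fin (n+1) → U) j))
          = q x * c x * (∏ j : Fin n, q (w j))
            + q x * ((∏ j : Fin n, q (w j)) * (∑ j : Fin n, c (w j))) := by
        intro w
        rw [Fin.prod_univ_succ, Fin.sum_univ_succ]
        simp only [Fin.cons_zero, Fin.cons_succ]
        ring
      rw [Finset.sum_congr rfl (fun w _ => h1 w), Finset.sum_add_distrib, ← Finset.mul_sum,
        ← Finset.mul_sum, sum_pi_prod_one q hq1, ih]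
      ring
    rw [Finset.sum_congr rfl (fun x _ => key x), Finset.sum_add_distrib, ← Finset.sum_mul, hq1]
    push_cast
    ring

lemma moment_two {k : ℕ} (q c : U → ℝ) (hq1 : ∑ x, q x = 1) (hm : ∑ x, q x * c x = 0) :
    ∑ u : Fin k → U, (∏ j, q (u j)) * (∑ j, c (u j))^2 = k * ∑ x, q x * (c x)^2 := by
  induction k with
  | zero => simp
  | succ n ih =>
    rw [sum_succ_decomp]
    have key : ∀ x : U, ∑ w : Fin n → U,
        (∏ j : Fin (n+1), q ((Fin.cons x w : Fin (n+1) → U) j)) * (∑ j : Fin (n+1), c ((Fin.cons x w : Fin (n+1) → U) j))^2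
        = q x * (c x)^2 + q x * (n * ∑ y, q y * (c y)^2) := by
      intro x
      have h1 : ∀ w : Fin n → U,
          (∏ j : Fin (n+1), q ((Fin.cons x w : Fin (n+1) → U) j)) * (∑ j : Fin (n+1), c ((Fin.cons x w : Fin (n+1) → U) j))^2
          = q x * (c x)^2 * (∏ j : Fin n, q (w j))
            + (2 * q x * c x) * ((∏ j : Fin n, q (w j)) * (∑ j : Fin n, c (w j)))
            + q x * ((∏ j : Fin n, q (w j)) * (∑ j : Fin n, c (w j))^2) := by
        intro w
        rw [Fin.prod_univ_succ, Fin.sum_univ_succ]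
        simp only [Fin.cons_zero, Fin.cons_succ]
        ring
      rw [Finset.sum_congr rfl (fun w _ => h1 w), Finset.sum_add_distrib, Finset.sum_add_distrib,
        ← Finset.mul_sum, ← Finset.mul_sum, ← Finset.mul_sum, sum_pi_prod_one q hq1,
        moment_one q c hq1, ih, hm]
      ring
    rw [Finset.sum_congr rfl (fun x _ => key x), Finset.sum_add_distrib, ← Finset.sum_mul, hq1]
    push_cast
    ring

lemma tail_bound {ι : Type*} [Fintype ι] (W g : ι → ℝ) (hW : ∀ i, 0 ≤ W i) {t B : ℝ}
    (ht : 0 < t) (hB : ∑ i, W i * (g i)^2 ≤ B) :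
    ∑ i, (if t < |g i| then W i else 0) ≤ B / t^2 := by
  have h1 : ∀ i, (if t < |g i| then W i else 0) ≤ W i * (g i)^2 / t^2 := by
    intro i
    by_cases h : t < |g i|
    · rw [if_pos h, le_div_iff₀ (by positivity)]
      have h2 : t^2 ≤ (g i)^2 := by
        rw [← sq_abs (g i)]
        exact pow_le_pow_left₀ ht.le h.le 2
      calc W i * t^2 ≤ W i * (g i)^2 := mul_le_mul_of_nonneg_left h2 (hW i)
        _ = W i * (g i)^2 := rfl
    · rw [if_neg h]
      have := hW i
      positivity
  calc ∑ i, (if t < |g i| then W i else 0) ≤ ∑ i, W i * (g i)^2 / t^2 :=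
        Finset.sum_le_sum (fun i _ => h1 i)
    _ = (∑ i, W i * (g i)^2) / t^2 := by rw [← Finset.sum_div]
    _ ≤ B / t^2 := by gcongr



variable {U : Type} [Fintype U]

lemma per_v_upper {s r : ℝ} (hs : 0 ≤ s) (hr : 0 < r) :
    s * Real.log r - s * Real.log s ≤ 2 * (Real.sqrt (s * r) - s) := by
  rcases eq_or_lt_of_le hs with h | h
  · simp [← h]
  · have hrs : 0 < r / s := div_pos hr h
    have h1 : s * Real.log r - s * Real.log s = s * Real.log (r / s) := by
      rw [Real.log_div hr.ne' h.ne']; ring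
    have h2 : Real.log (r / s) = 2 * Real.log (Real.sqrt (r / s)) := by
      rw [Real.log_sqrt hrs.le]; ring
    have h3 : Real.log (Real.sqrt (r / s)) ≤ Real.sqrt (r / s) - 1 :=
      Real.log_le_sub_one_of_pos (Real.sqrt_pos.2 hrs)
    have h4 : s * Real.sqrt (r / s) = Real.sqrt (s * r) := by
      rw [show s * r = s^2 * (r / s) by field_simp, Real.sqrt_mul (sq_nonneg s),
        Real.sqrt_sq hs]
    calc s * Real.log r - s * Real.log s = s * (2 * Real.log (Real.sqrt (r / s))) := by
          rw [h1, h2]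
      _ ≤ s * (2 * (Real.sqrt (r / s) - 1)) := by
          apply mul_le_mul_of_nonneg_left _ hs
          linarith
      _ = 2 * (s * Real.sqrt (r / s) - s) := by ring
      _ = 2 * (Real.sqrt (s * r) - s) := by rw [h4]

lemma log_sum_le (s r : U → ℝ) (hs0 : ∀ v, 0 ≤ s v) (hs1 : ∑ v, s v = 1)
    (hr0 : ∀ v, 0 < r v) (hr1 : ∑ v, r v = 1) :
    ∑ v, s v * Real.log (r v) ≤ ∑ v, s v * Real.log (s v) - (∑ v, |s v - r v|)^2 / 4 := by
  set H := ∑ v, (Real.sqrt (s v) - Real.sqrt (r v))^2 with hH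
  set D := ∑ v, |s v - r v| with hD
  have hsq : ∀ v, (Real.sqrt (s v))^2 = s v := fun v => Real.sq_sqrt (hs0 v)
  have hrq : ∀ v, (Real.sqrt (r v))^2 = r v := fun v => Real.sq_sqrt (hr0 v).le
  have hmul : ∀ v, Real.sqrt (s v) * Real.sqrt (r v) = Real.sqrt (s v * r v) :=
    fun v => (Real.sqrt_mul (hs0 v) (r v)).symm
  -- step 1
  have step1 : ∑ v, s v * Real.log (r v) - ∑ v, s v * Real.log (s v)
      ≤ 2 * (∑ v, Real.sqrt (s v * r v)) - 2 := by
    rw [← Finset.sum_sub_distrib]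
    calc ∑ v, (s v * Real.log (r v) - s v * Real.log (s v))
        ≤ ∑ v, 2 * (Real.sqrt (s v * r v) - s v) :=
          Finset.sum_le_sum (fun v _ => per_v_upper (hs0 v) (hr0 v))
      _ = 2 * (∑ v, Real.sqrt (s v * r v)) - 2 := by
          rw [← Finset.mul_sum, Finset.sum_sub_distrib, hs1]; ring
  -- step 2 : H = 2 - 2 ∑ √(sr)
  have step2 : H = 2 - 2 * ∑ v, Real.sqrt (s v * r v) := by
    rw [hH]
    have : ∀ v, (Real.sqrt (s v) - Real.sqrt (r v))^2
        = s v + r v - 2 * Real.sqrt (s v * r v) := by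
      intro v
      rw [sub_sq, hsq, hrq, ← hmul]
      ring
    rw [Finset.sum_congr rfl (fun v _ => this v)]
    rw [Finset.sum_sub_distrib, Finset.sum_add_distrib, hs1, hr1, ← Finset.mul_sum]
    ring
  -- step 3 : D^2 ≤ 4 * H
  have habs : ∀ v, |s v - r v| = |Real.sqrt (s v) - Real.sqrt (r v)| *
      (Real.sqrt (s v) + Real.sqrt (r v)) := by
    intro v
    have hdiff : s v - r v = (Real.sqrt (s v) - Real.sqrt (r v)) *
        (Real.sqrt (s v) + Real.sqrt (r v)) := by
      have := hsq v; have := hrq v; nlinarith [hsq v, hrq v]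
    rw [hdiff, abs_mul, abs_of_nonneg (show (0:ℝ) ≤ Real.sqrt (s v) + Real.sqrt (r v) by positivity)]
  have hCS : D^2 ≤ H * ∑ v, (Real.sqrt (s v) + Real.sqrt (r v))^2 := by
    rw [hD, Finset.sum_congr rfl (fun v _ => habs v)]
    calc (∑ v, |Real.sqrt (s v) - Real.sqrt (r v)| * (Real.sqrt (s v) + Real.sqrt (r v)))^2
        ≤ (∑ v, |Real.sqrt (s v) - Real.sqrt (r v)|^2) *
          ∑ v, (Real.sqrt (s v) + Real.sqrt (r v))^2 :=
          Finset.sum_mul_sq_le_sq_mul_sq _ _ _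
      _ = H * ∑ v, (Real.sqrt (s v) + Real.sqrt (r v))^2 := by
          rw [hH]
          congr 1
          exact Finset.sum_congr rfl (fun v _ => by rw [sq_abs])
  have hamgm : ∑ v, Real.sqrt (s v * r v) ≤ 1 := by
    calc ∑ v, Real.sqrt (s v * r v) ≤ ∑ v, (s v + r v) / 2 := by
          apply Finset.sum_le_sum
          intro v _
          rw [← hmul]
          nlinarith [sq_nonneg (Real.sqrt (s v) - Real.sqrt (r v)), hsq v, hrq v]
      _ = 1 := by rw [← Finset.sum_div, Finset.sum_add_distrib, hs1, hr1]; norm_num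
  have hsum4 : ∑ v, (Real.sqrt (s v) + Real.sqrt (r v))^2 ≤ 4 := by
    have : ∀ v, (Real.sqrt (s v) + Real.sqrt (r v))^2
        = s v + r v + 2 * Real.sqrt (s v * r v) := by
      intro v
      rw [add_sq, hsq, hrq, ← hmul]; ring
    rw [Finset.sum_congr rfl (fun v _ => this v), Finset.sum_add_distrib,
      Finset.sum_add_distrib, hs1, hr1, ← Finset.mul_sum]
    linarith
  have hH0 : 0 ≤ H := Finset.sum_nonneg (fun v _ => sq_nonneg _)
  have hD2 : D^2 ≤ 4 * H := by
    calc D^2 ≤ H * ∑ v, (Real.sqrt (s v) + Real.sqrt (r v))^2 := hCS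
      _ ≤ H * 4 := mul_le_mul_of_nonneg_left hsum4 hH0
      _ = 4 * H := by ring
  -- combine
  have : 2 * (∑ v, Real.sqrt (s v * r v)) - 2 = -H := by rw [step2]; ring
  linarith [step1]

lemma per_v_lower {s r : ℝ} (hs : 0 ≤ s) (hr : 0 < r) :
    s * Real.log s - s * Real.log r ≤ s^2 / r - s := by
  rcases eq_or_lt_of_le hs with h | h
  · subst h
    simp
  · have h1 : s * Real.log s - s * Real.log r = s * Real.log (s / r) := by
      rw [Real.log_div h.ne' hr.ne']; ring
    have h2 : Real.log (s / r) ≤ s / r - 1 := Real.log_le_sub_one_of_pos (div_pos h hr)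
    calc s * Real.log s - s * Real.log r = s * Real.log (s / r) := h1
      _ ≤ s * (s / r - 1) := mul_le_mul_of_nonneg_left h2 hs
      _ = s^2 / r - s := by field_simp

lemma log_sum_ge (s r : U → ℝ) (hs0 : ∀ v, 0 ≤ s v) (hs1 : ∑ v, s v = 1)
    (hr0 : ∀ v, 0 < r v) (hr1 : ∑ v, r v = 1) {e rm : ℝ} (hrm : 0 < rm) (he : 0 ≤ e)
    (hcl : ∀ v, |s v - r v| ≤ e) (hmin : ∀ v, rm ≤ r v) :
    ∑ v, s v * Real.log (s v)
      - (2 * (Fintype.card U) * e + (Fintype.card U) * e^2 / rm)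
      ≤ ∑ v, s v * Real.log (r v) := by
  have key : ∀ v, s v * Real.log (s v) - s v * Real.log (r v)
      ≤ r v + 2 * e + e^2 / rm - s v := by
    intro v
    have h1 := per_v_lower (hs0 v) (hr0 v)
    have h2 : (s v)^2 / r v ≤ r v + 2 * e + e^2 / rm := by
      have hrne : r v ≠ 0 := (hr0 v).ne'
      have hid : (s v)^2 / r v = r v + 2 * (s v - r v) + (s v - r v)^2 / r v := by
        field_simp
        ring
      have h3 : 2 * (s v - r v) ≤ 2 * e := by
        have := (abs_le.mp (hcl v)).2
        linarith
      have h4 : (s v - r v)^2 / r v ≤ e^2 / rm := by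
        apply div_le_div₀ (by positivity) _ hrm (hmin v)
        calc (s v - r v)^2 = |s v - r v|^2 := (sq_abs _).symm
          _ ≤ e^2 := pow_le_pow_left₀ (abs_nonneg _) (hcl v) 2
      linarith
    linarith
  have hsum : ∑ v, (s v * Real.log (s v) - s v * Real.log (r v))
      ≤ 2 * (Fintype.card U) * e + (Fintype.card U) * e^2 / rm := by
    calc ∑ v, (s v * Real.log (s v) - s v * Real.log (r v))
        ≤ ∑ v, (r v + 2 * e + e^2 / rm - s v) := Finset.sum_le_sum (fun v _ => key v)
      _ = 2 * (Fintype.card U) * e + (Fintype.card U) * e^2 / rm := by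
          rw [Finset.sum_sub_distrib, Finset.sum_add_distrib, Finset.sum_add_distrib,
            hs1, hr1, Finset.sum_const, Finset.sum_const]
          simp only [Finset.card_univ, nsmul_eq_mul]
          ring
  rw [Finset.sum_sub_distrib] at hsum
  linarith




open Classical in
lemma wrapper {U : Type} [Fintype U] (q : U → ℝ) (hq0 : ∀ v, 0 ≤ q v) (hq1 : ∑ v, q v = 1)
    (Cond : ∀ k : ℕ, (Fin k → U) → Prop) (η : ℝ) (hη : 0 < η) (K : ℕ)
    (hdet : ∀ k : ℕ, K ≤ k → ∀ u : Fin k → U,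
      (∀ v, |(∑ j, if u j = v then (1:ℝ) else 0) - k * q v| ≤ k * η) → Cond k u) :
    Filter.Tendsto (fun k : ℕ => ∑ u : Fin k → U, if Cond k u then ∏ j, q (u j) else 0)
      Filter.atTop (nhds 1) := by
  have hq_le1 : ∀ v, q v ≤ 1 := by
    intro v
    rw [← hq1]
    exact Finset.single_le_sum (fun x _ => hq0 x) (Finset.mem_univ v)
  have hWsum : ∀ k : ℕ, ∑ u : Fin k → U, ∏ j, q (u j) = 1 :=
    fun k => sum_pi_prod_one q hq1
  have hW0 : ∀ (k : ℕ) (u : Fin k → U), 0 ≤ ∏ j, q (u j) :=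
    fun k u => Finset.prod_nonneg fun j _ => hq0 (u j)
  have hsplit : ∀ k : ℕ, ∑ u : Fin k → U, (if Cond k u then ∏ j, q (u j) else 0)
      = 1 - ∑ u : Fin k → U, (if ¬ Cond k u then ∏ j, q (u j) else 0) := by
    intro k
    rw [eq_sub_iff_add_eq, ← Finset.sum_add_distrib, ← hWsum k]
    refine Finset.sum_congr rfl fun u _ => ?_
    by_cases h : Cond k u
    · rw [if_pos h, if_neg (not_not_intro h), add_zero]
    · rw [if_neg h, if_pos h, zero_add]
  have herr0 : ∀ k : ℕ, 0 ≤ ∑ u : Fin k → U, (if ¬ Cond k u then ∏ j, q (u j) else 0) := by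
    intro k
    refine Finset.sum_nonneg fun u _ => ?_
    by_cases h : ¬ Cond k u
    · rw [if_pos h]; exact hW0 k u
    · rw [if_neg h]
  have herrle : ∀ k : ℕ, K ≤ k → 1 ≤ k →
      ∑ u : Fin k → U, (if ¬ Cond k u then ∏ j, q (u j) else 0)
        ≤ ((Fintype.card U : ℝ) / η^2) / k := by
    intro k hKk hk1
    have hk0 : (0:ℝ) < k := by exact_mod_cast hk1
    have hstep1 : ∀ u : Fin k → U, (if ¬ Cond k u then ∏ j, q (u j) else 0)
        ≤ ∑ v, (if (k:ℝ) * η < |(∑ j, if u j = v then (1:ℝ) else 0) - k * q v|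
            then ∏ j, q (u j) else 0) := by
      intro u
      have hterm : ∀ v : U, 0 ≤ (if (k:ℝ) * η < |(∑ j, if u j = v then (1:ℝ) else 0) - k * q v|
          then ∏ j, q (u j) else 0) := by
        intro v
        by_cases hh : (k:ℝ) * η < |(∑ j, if u j = v then (1:ℝ) else 0) - k * q v|
        · rw [if_pos hh]; exact hW0 k u
        · rw [if_neg hh]
      by_cases h : ¬ Cond k u
      · rw [if_pos h]
        have hbad : ¬ ∀ v, |(∑ j, if u j = v then (1:ℝ) else 0) - k * q v| ≤ k * η :=
          fun hgood => h (hdet k hKk u hgood)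
        push_neg at hbad
        obtain ⟨v0, hv0⟩ := hbad
        calc (∏ j, q (u j))
            = (if (k:ℝ) * η < |(∑ j, if u j = v0 then (1:ℝ) else 0) - k * q v0|
              then ∏ j, q (u j) else 0) := by rw [if_pos hv0]
          _ ≤ _ := Finset.single_le_sum (fun v _ => hterm v) (Finset.mem_univ v0)
      · rw [if_neg h]
        exact Finset.sum_nonneg fun v _ => hterm v
    have hstep2 : ∀ v : U,
        ∑ u : Fin k → U, (if (k:ℝ) * η < |(∑ j, if u j = v then (1:ℝ) else 0) - k * q v|
            then ∏ j, q (u j) else 0) ≤ (k:ℝ) / ((k:ℝ) * η)^2 := by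
      intro v
      apply tail_bound (fun u : Fin k → U => ∏ j, q (u j))
        (fun u : Fin k → U => (∑ j, if u j = v then (1:ℝ) else 0) - k * q v)
        (hW0 k) (by positivity)
      set c : U → ℝ := fun x => (if x = v then (1:ℝ) else 0) - q v with hcdef
      have hid : ∀ u : Fin k → U,
          (∑ j, if u j = v then (1:ℝ) else 0) - k * q v = ∑ j, c (u j) := by
        intro u
        rw [hcdef]
        rw [Finset.sum_sub_distrib, Finset.sum_const, Finset.card_univ, Fintype.card_fin,
          nsmul_eq_mul]
      have hmean : ∑ x, q x * c x = 0 := by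
        rw [hcdef]
        simp only [mul_sub, Finset.sum_sub_distrib, mul_ite, mul_one, mul_zero]
        rw [Finset.sum_ite_eq' Finset.univ v q, ← Finset.sum_mul, hq1]
        simp
      have hvar : ∑ x, q x * (c x)^2 ≤ 1 := by
        calc ∑ x, q x * (c x)^2 ≤ ∑ x, q x := by
              refine Finset.sum_le_sum fun x _ => ?_
              have h1 : (c x)^2 ≤ 1 := by
                have hcx : c x = (if x = v then (1:ℝ) else 0) - q v := by rw [hcdef]
                by_cases hx : x = v
                · rw [hcx, if_pos hx]; nlinarith [hq0 v, hq_le1 v]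
                · rw [hcx, if_neg hx]; nlinarith [hq0 v, hq_le1 v]
              nlinarith [hq0 x]
          _ = 1 := hq1
      calc ∑ u : Fin k → U, (∏ j, q (u j)) * ((∑ j, if u j = v then (1:ℝ) else 0) - k * q v)^2
          = ∑ u : Fin k → U, (∏ j, q (u j)) * (∑ j, c (u j))^2 :=
            Finset.sum_congr rfl fun u _ => by rw [hid u]
        _ = k * ∑ x, q x * (c x)^2 := moment_two q c hq1 hmean
        _ ≤ k * 1 := mul_le_mul_of_nonneg_left hvar hk0.le
        _ = k := mul_one _
    calc ∑ u : Fin k → U, (if ¬ Cond k u then ∏ j, q (u j) else 0)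
        ≤ ∑ u : Fin k → U, ∑ v, (if (k:ℝ) * η < |(∑ j, if u j = v then (1:ℝ) else 0) - k * q v|
            then ∏ j, q (u j) else 0) := Finset.sum_le_sum fun u _ => hstep1 u
      _ = ∑ v, ∑ u : Fin k → U, (if (k:ℝ) * η < |(∑ j, if u j = v then (1:ℝ) else 0) - k * q v|
            then ∏ j, q (u j) else 0) := Finset.sum_comm
      _ ≤ ∑ _v : U, (k:ℝ) / ((k:ℝ) * η)^2 := Finset.sum_le_sum fun v _ => hstep2 v
      _ = (Fintype.card U : ℝ) * ((k:ℝ) / ((k:ℝ) * η)^2) := by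
          rw [Finset.sum_const, Finset.card_univ, nsmul_eq_mul]
      _ = ((Fintype.card U : ℝ) / η^2) / k := by
          field_simp
  have htend : Filter.Tendsto (fun k : ℕ => ((Fintype.card U : ℝ) / η^2) / k)
      Filter.atTop (nhds 0) := tendsto_const_div_atTop_nhds_zero_nat _
  have herr_tendsto : Filter.Tendsto
      (fun k : ℕ => ∑ u : Fin k → U, (if ¬ Cond k u then ∏ j, q (u j) else 0))
      Filter.atTop (nhds 0) := by
    apply squeeze_zero' (Filter.Eventually.of_forall herr0) _ htend
    filter_upwards [Filter.eventually_ge_atTop (max K 1)] with k hk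
    exact herrle k (le_trans (le_max_left _ _) hk) (le_trans (le_max_right _ _) hk)
  have heq : (fun k : ℕ => ∑ u : Fin k → U, if Cond k u then ∏ j, q (u j) else 0)
      = fun k : ℕ => 1 - ∑ u : Fin k → U, (if ¬ Cond k u then ∏ j, q (u j) else 0) :=
    funext hsplit
  rw [heq]
  simpa using tendsto_const_nhds.sub herr_tendsto


end MapConsist

set_option maxHeartbeats 4000000



open MeasureTheory Classical in
/-- Theorem 1 of the paper: statistical consistency of the MAP estimator.
Under conditions (C1)–(C4), for every `a ∈ A` and `θ ∈ Θ(a)`, the probability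
(under `k` i.i.d. draws from `p_{(a,θ)}`) that the posterior score
`m_b(u) = π(b) · ∫_{Θ(b)} ∏_j p_{(b,θ')}(u_j) · f_b(θ') dθ'` is uniquely maximized at `a`
converges to `1` as `k → ∞`.  The probability of an event `E ⊆ U^k` under the product
measure is `∑_{u ∈ E} ∏ j, p_{(a,θ)} (u j)`. -/
theorem map_estimator_statistically_consistent
    (U : Type) [Fintype U] (A : Type) [Fintype A]
    (d : A → ℕ) (Θ : ∀ a : A, Set (Fin (d a) → ℝ))
    (hΘ_open : ∀ a, IsOpen (Θ a)) (hΘ_ne : ∀ a, (Θ a).Nonempty)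
    (p : ∀ a : A, (Fin (d a) → ℝ) → U → ℝ)
    (π : A → ℝ) (f : ∀ a : A, (Fin (d a) → ℝ) → ℝ)
    -- `π` is a probability distribution on `A`:
    (hπ0 : ∀ a, 0 ≤ π a) (hπ1 : (∑ a, π a) = 1)
    -- each `p_{(a,θ)}`, `θ ∈ Θ(a)`, is a probability distribution on `U`:
    (hp_dist : ∀ a, ∀ θ ∈ Θ a, (∀ u, 0 ≤ p a θ u) ∧ (∑ u, p a θ u) = 1)
    -- each `f_a` is a probability density on `Θ(a)`:
    (hf_nonneg : ∀ a, ∀ θ ∈ Θ a, 0 ≤ f a θ)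
    (hf_int : ∀ a, (∫ θ in Θ a, f a θ) = 1)
    -- (C1):
    (hC1 : ∀ a, 0 < π a)
    -- (C2): densities are continuous, bounded and strictly positive:
    (hC2_cont : ∀ a, ContinuousOn (f a) (Θ a))
    (hC2_bdd : ∀ a, ∃ C : ℝ, ∀ θ ∈ Θ a, f a θ ≤ C)
    (hC2_pos : ∀ a, ∀ θ ∈ Θ a, 0 < f a θ)
    -- (C3): likelihoods are continuous and strictly positive:
    (hC3_cont : ∀ a, ∀ u : U, ContinuousOn (fun θ => p a θ u) (Θ a))
    (hC3_pos : ∀ a, ∀ θ ∈ Θ a, ∀ u, 0 < p a θ u)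
    -- (C4): identifiability:
    (hC4 : ∀ a, ∀ θ ∈ Θ a, ∀ b, b ≠ a →
      0 < sInf ((fun θ' => ∑ u, |p a θ u - p b θ' u|) '' Θ b)) :
    ∀ a : A, ∀ θ ∈ Θ a,
      Filter.Tendsto
        (fun k : ℕ =>
          ∑ u : Fin k → U,
            if ∀ b : A, b ≠ a →
                 π b * (∫ θ' in Θ b, (∏ j : Fin k, p b θ' (u j)) * f b θ')
                   < π a * (∫ θ'' in Θ a, (∏ j : Fin k, p a θ'' (u j)) * f a θ'')
            then ∏ j : Fin k, p a θ (u j) else 0)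
        Filter.atTop (nhds 1) := by
  intro a θ hθ
  obtain ⟨hq0, hq1⟩ := hp_dist a θ hθ
  -- basic facts
  have hUne : Nonempty U := by
    by_contra h
    rw [not_nonempty_iff] at h
    rw [Finset.univ_eq_empty, Finset.sum_empty] at hq1
    norm_num at hq1
  have huniv_ne : (Finset.univ : Finset U).Nonempty := Finset.univ_nonempty
  set n : ℝ := (Fintype.card U : ℝ) with hndef
  have hn1 : (1:ℝ) ≤ n := by
    rw [hndef]
    exact_mod_cast Fintype.card_pos_iff.mpr hUne
  have hn0 : (0:ℝ) < n := lt_of_lt_of_le one_pos hn1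
  set qmin : ℝ := Finset.univ.inf' huniv_ne (p a θ) with hqmindef
  have hqmin_pos : 0 < qmin := by
    rw [hqmindef, Finset.lt_inf'_iff]
    exact fun v _ => hC3_pos a θ hθ v
  have hqmin_le : ∀ v, qmin ≤ p a θ v := fun v => Finset.inf'_le _ (Finset.mem_univ v)
  -- ε from (C4)
  obtain ⟨ε, hε_pos, hε_le⟩ : ∃ ε : ℝ, 0 < ε ∧ ∀ b, b ≠ a → ∀ θ' ∈ Θ b,
      ε ≤ ∑ v, |p a θ v - p b θ' v| := by
    by_cases hA : ∃ b : A, b ≠ a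
    · set s : Finset A := Finset.univ.filter (fun b : A => b ≠ a) with hs
      have hsne : s.Nonempty :=
        ⟨hA.choose, by rw [hs]; exact Finset.mem_filter.mpr ⟨Finset.mem_univ _, hA.choose_spec⟩⟩
      refine ⟨s.inf' hsne (fun b => sInf ((fun θ' => ∑ v, |p a θ v - p b θ' v|) '' Θ b)),
        ?_, ?_⟩
      · rw [Finset.lt_inf'_iff]
        intro b hb
        rw [hs, Finset.mem_filter] at hb
        exact hC4 a θ hθ b hb.2
      · intro b hb θ' hθ'
        refine le_trans (Finset.inf'_le
          (fun b' => sInf ((fun θ' => ∑ v, |p a θ v - p b' θ' v|) '' Θ b'))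
          (by rw [hs]; exact Finset.mem_filter.mpr ⟨Finset.mem_univ b, hb⟩)) ?_
        refine csInf_le ⟨0, fun x hx => ?_⟩ ⟨θ', hθ', rfl⟩
        obtain ⟨θ'', _, rfl⟩ := hx
        exact Finset.sum_nonneg fun v _ => abs_nonneg _
    · exact ⟨1, one_pos, fun b hb => absurd ⟨b, hb⟩ hA⟩
  -- constants
  set γ : ℝ := ε^2/16 with hγdef
  have hγ : 0 < γ := by rw [hγdef]; positivity
  set w0 : ℝ := min (γ/(8*n)) qmin with hw0def
  have hw0 : 0 < w0 := lt_min (by positivity) hqmin_pos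
  set τ : ℝ := w0/2 with hτdef
  have hτ : 0 < τ := by rw [hτdef]; positivity
  set η : ℝ := min (w0/2) (ε/(2*n)) with hηdef
  have hη : 0 < η := lt_min (by positivity) (by positivity)
  set β : ℝ := 2*n*(η+τ) + n*(η+τ)^2/(qmin/2) with hβdef
  have hw : η + τ ≤ w0 := by
    have h1 : η ≤ w0/2 := min_le_left _ _
    have h2 : τ = w0/2 := hτdef
    linarith
  have hβγ : β ≤ γ/2 := by
    have hwγ : η + τ ≤ γ/(8*n) := le_trans hw (min_le_left _ _)
    have hwq : η + τ ≤ qmin := le_trans hw (min_le_right _ _)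
    have h1 : 2*n*(η+τ) ≤ γ/4 := by
      calc 2*n*(η+τ) ≤ 2*n*(γ/(8*n)) := by
            apply mul_le_mul_of_nonneg_left hwγ (by positivity)
        _ = γ/4 := by field_simp; ring
    have h2 : n*(η+τ)^2/(qmin/2) ≤ γ/4 := by
      have hpos : 0 < η + τ := by positivity
      have heq : n*(η+τ)^2/(qmin/2) = (2*n*(η+τ))*((η+τ)/qmin) := by
        field_simp
      have hle1 : (η+τ)/qmin ≤ 1 := (div_le_one hqmin_pos).mpr hwq
      calc n*(η+τ)^2/(qmin/2) = (2*n*(η+τ))*((η+τ)/qmin) := heq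
        _ ≤ (2*n*(η+τ))*1 := by
            apply mul_le_mul_of_nonneg_left hle1 (by positivity)
        _ = 2*n*(η+τ) := mul_one _
        _ ≤ γ/4 := h1
    rw [hβdef]; linarith
  have hnη : n * η ≤ ε/2 := by
    have h1 : η ≤ ε/(2*n) := min_le_right _ _
    calc n*η ≤ n*(ε/(2*n)) := mul_le_mul_of_nonneg_left h1 hn0.le
      _ = ε/2 := by field_simp
  have hτq : τ ≤ qmin/2 := by
    have h1 : w0 ≤ qmin := min_le_right _ _
    rw [hτdef]; linarith
  -- the ball around θ
  have hnhds : Θ a ∈ nhds θ := (hΘ_open a).mem_nhds hθ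
  have hfθ : 0 < f a θ := hC2_pos a θ hθ
  set c : ℝ := f a θ / 2 with hcdef
  have hc : 0 < c := by rw [hcdef]; positivity
  have hev0 : ∀ᶠ θ'' in nhds θ, θ'' ∈ Θ a := hnhds
  have hev1 : ∀ᶠ θ'' in nhds θ, c < f a θ'' :=
    ((hC2_cont a).continuousAt hnhds).eventually
      (eventually_gt_nhds (by rw [hcdef]; linarith))
  have hev2 : ∀ᶠ θ'' in nhds θ, ∀ v, |p a θ'' v - p a θ v| ≤ τ := by
    rw [Filter.eventually_all]
    intro v
    have hc3 : ContinuousAt (fun θ'' => p a θ'' v) θ := (hC3_cont a v).continuousAt hnhds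
    have hmem : Metric.closedBall (p a θ v) τ ∈ nhds (p a θ v) :=
      Metric.closedBall_mem_nhds _ hτ
    filter_upwards [hc3 hmem] with θ'' h
    simpa [Real.dist_eq] using h
  obtain ⟨rad, hrad_pos, hball⟩ :=
    Metric.eventually_nhds_iff_ball.mp (hev0.and (hev1.and hev2))
  set B : Set (Fin (d a) → ℝ) := Metric.closedBall θ (rad/2) with hBdef
  have hBsub : B ⊆ Metric.ball θ rad := by
    rw [hBdef]
    exact Metric.closedBall_subset_ball (by linarith)
  have hBΘ : B ⊆ Θ a := fun x hx => (hball x (hBsub hx)).1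
  have hBf : ∀ x ∈ B, c ≤ f a x := fun x hx => (hball x (hBsub hx)).2.1.le
  have hBp : ∀ x ∈ B, ∀ v, |p a x v - p a θ v| ≤ τ := fun x hx => (hball x (hBsub hx)).2.2
  have hBmeas : MeasurableSet B := measurableSet_closedBall
  set V : ℝ := (volume B).toReal with hVdef
  have hV : 0 < V := by
    rw [hVdef]
    apply ENNReal.toReal_pos
    · refine ne_of_gt (lt_of_lt_of_le
        (Metric.measure_ball_pos volume θ (by positivity : (0:ℝ) < rad/2)) ?_)
      exact measure_mono Metric.ball_subset_closedBall
    · exact measure_closedBall_lt_top.ne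
  -- choice of K
  set R : ℝ := π a * (c * V) with hRdef
  have hR : 0 < R := by
    rw [hRdef]
    exact mul_pos (hC1 a) (mul_pos hc hV)
  obtain ⟨K, hK⟩ := exists_nat_gt (2/(γ*R))
  have hKbig : ∀ k : ℕ, K ≤ k → (1:ℝ) < R * Real.exp (k*γ/2) := by
    intro k hk
    have hk' : 2/(γ*R) < (k:ℝ) := lt_of_lt_of_le hK (by exact_mod_cast hk)
    have h1 : 1/R < (k:ℝ)*γ/2 := by
      have h2 := mul_lt_mul_of_pos_right hk' (by positivity : (0:ℝ) < γ/2)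
      calc 1/R = (2/(γ*R))*(γ/2) := by field_simp
        _ < (k:ℝ)*(γ/2) := h2
        _ = (k:ℝ)*γ/2 := by ring
    have h2 : (k:ℝ)*γ/2 < Real.exp ((k:ℝ)*γ/2) := by
      have := Real.add_one_le_exp ((k:ℝ)*γ/2)
      linarith
    rw [show (1:ℝ) = R * (1/R) by field_simp]
    exact mul_lt_mul_of_pos_left (lt_trans h1 h2) hR
  -- general facts
  have hple1 : ∀ (b : A) (θ' : Fin (d b) → ℝ), θ' ∈ Θ b → ∀ x, p b θ' x ≤ 1 := by
    intro b θ' hθ' x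
    obtain ⟨h0, h1⟩ := hp_dist b θ' hθ'
    rw [← h1]
    exact Finset.single_le_sum (fun y _ => h0 y) (Finset.mem_univ x)
  have hfaInta : ∀ b : A, IntegrableOn (f b) (Θ b) := by
    intro b
    by_contra hcon
    have h := hf_int b
    rw [MeasureTheory.integral_undef hcon] at h
    norm_num at h
  -- the deterministic core
  have hdet : ∀ k : ℕ, max K 1 ≤ k → ∀ u : Fin k → U,
      (∀ v, |(∑ j, if u j = v then (1:ℝ) else 0) - k * p a θ v| ≤ k * η) →
      ∀ b : A, b ≠ a →
        π b * (∫ θ' in Θ b, (∏ j : Fin k, p b θ' (u j)) * f b θ')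
          < π a * (∫ θ'' in Θ a, (∏ j : Fin k, p a θ'' (u j)) * f a θ'') := by
    intro k hk u hgood b hb
    have hKk : K ≤ k := le_trans (le_max_left _ _) hk
    have hk1 : 1 ≤ k := le_trans (le_max_right _ _) hk
    have hk0 : (0:ℝ) < k := by exact_mod_cast hk1
    set cnt : U → ℝ := fun v => ∑ j, if u j = v then (1:ℝ) else 0 with hcntdef
    set sh : U → ℝ := fun v => cnt v / k with hshdef
    have hcnt0 : ∀ v, 0 ≤ cnt v := by
      intro v
      rw [hcntdef]
      refine Finset.sum_nonneg fun j _ => ?_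
      by_cases h : u j = v
      · rw [if_pos h]; norm_num
      · rw [if_neg h]
    have hsh0 : ∀ v, 0 ≤ sh v := fun v => div_nonneg (hcnt0 v) hk0.le
    have hcnt_sum : ∑ v, cnt v = k := by
      rw [hcntdef, Finset.sum_comm]
      simp [Finset.sum_ite_eq]
    have hsh1 : ∑ v, sh v = 1 := by
      rw [hshdef, ← Finset.sum_div, hcnt_sum]
      field_simp
    have hshq : ∀ v, |sh v - p a θ v| ≤ η := by
      intro v
      have h := hgood v
      have heq : sh v - p a θ v = (cnt v - k * p a θ v)/k := by
        rw [hshdef]; field_simp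
      rw [heq, abs_div, abs_of_pos hk0, div_le_iff₀ hk0]
      linarith
    have htransfer : ∀ h : U → ℝ, ∑ j, h (u j) = ∑ v, cnt v * h v := by
      intro h
      have h1 : ∀ v, cnt v * h v = ∑ j, (if u j = v then (1:ℝ) else 0) * h v := by
        intro v; rw [hcntdef, Finset.sum_mul]
      rw [Finset.sum_congr rfl fun v _ => h1 v, Finset.sum_comm]
      refine Finset.sum_congr rfl fun j _ => ?_
      simp [Finset.sum_ite_eq]
    have hprodexp : ∀ (b' : A) (θ' : Fin (d b') → ℝ), (∀ v, 0 < p b' θ' v) →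
        ∏ j, p b' θ' (u j) = Real.exp (k * ∑ v, sh v * Real.log (p b' θ' v)) := by
      intro b' θ' hr
      have h1 : ∏ j, p b' θ' (u j) = Real.exp (∑ j, Real.log (p b' θ' (u j))) := by
        rw [Real.exp_sum]
        exact Finset.prod_congr rfl fun j _ => (Real.exp_log (hr (u j))).symm
      rw [h1, htransfer (fun x => Real.log (p b' θ' x))]
      congr 1
      rw [Finset.mul_sum]
      refine Finset.sum_congr rfl fun v _ => ?_
      rw [hshdef]
      field_simp
    set T : ℝ := ∑ v, sh v * Real.log (sh v) with hTdef
    -- upper bound over Θ b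
    have hup : ∀ θ' ∈ Θ b, ∑ v, sh v * Real.log (p b θ' v) ≤ T - γ := by
      intro θ' hθ'
      obtain ⟨hr0', hr1'⟩ := hp_dist b θ' hθ'
      have h := MapConsist.log_sum_le sh (p b θ') hsh0 hsh1 (hC3_pos b θ' hθ') hr1'
      have hD : ε/2 ≤ ∑ v, |sh v - p b θ' v| := by
        have h1 : ε ≤ ∑ v, |p a θ v - p b θ' v| := hε_le b hb θ' hθ'
        have h2 : ∑ v, |p a θ v - p b θ' v|
            ≤ ∑ v, (|p a θ v - sh v| + |sh v - p b θ' v|) :=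
          Finset.sum_le_sum fun v _ => abs_sub_le _ _ _
        have h3 : ∑ v, |p a θ v - sh v| ≤ n * η := by
          calc ∑ v, |p a θ v - sh v| ≤ ∑ _v : U, η := by
                refine Finset.sum_le_sum fun v _ => ?_
                rw [abs_sub_comm]
                exact hshq v
            _ = n * η := by
                rw [Finset.sum_const, Finset.card_univ, nsmul_eq_mul, hndef]
        rw [Finset.sum_add_distrib] at h2
        linarith
      have hD2 : (ε/2)^2 ≤ (∑ v, |sh v - p b θ' v|)^2 :=
        pow_le_pow_left₀ (by positivity) hD 2
      have hε4 : (ε/2)^2 = ε^2/4 := by ring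
      have hγle : γ ≤ (∑ v, |sh v - p b θ' v|)^2/4 := by
        rw [hγdef]
        linarith
      linarith
    set M : ℝ := Real.exp (k * (T - γ)) with hMdef
    have hM0 : 0 < M := Real.exp_pos _
    have hprod_ub : ∀ θ' ∈ Θ b, ∏ j, p b θ' (u j) ≤ M := by
      intro θ' hθ'
      rw [hprodexp b θ' (hC3_pos b θ' hθ'), hMdef]
      apply Real.exp_le_exp.mpr
      exact mul_le_mul_of_nonneg_left (hup θ' hθ') hk0.le
    have hmeasb : MeasurableSet (Θ b) := (hΘ_open b).measurableSet
    have hgcont : ContinuousOn (fun θ' => (∏ j, p b θ' (u j)) * f b θ') (Θ b) :=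
      (continuousOn_finset_prod _ fun j _ => hC3_cont b (u j)).mul (hC2_cont b)
    have hg_nonneg : ∀ θ' ∈ Θ b, 0 ≤ (∏ j, p b θ' (u j)) * f b θ' := fun θ' hθ' =>
      mul_nonneg (Finset.prod_nonneg fun j _ => (hC3_pos b θ' hθ' (u j)).le)
        (hf_nonneg b θ' hθ')
    have hgInt : IntegrableOn (fun θ' => (∏ j, p b θ' (u j)) * f b θ') (Θ b) := by
      apply Integrable.mono' (hfaInta b) (hgcont.aestronglyMeasurable hmeasb)
      rw [ae_restrict_iff' hmeasb]
      apply ae_of_all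
      intro θ' hθ'
      rw [Real.norm_eq_abs, abs_of_nonneg (hg_nonneg θ' hθ')]
      have hp1 : ∏ j, p b θ' (u j) ≤ 1 :=
        Finset.prod_le_one (fun j _ => (hC3_pos b θ' hθ' (u j)).le)
          (fun j _ => hple1 b θ' hθ' (u j))
      calc (∏ j, p b θ' (u j)) * f b θ' ≤ 1 * f b θ' :=
            mul_le_mul_of_nonneg_right hp1 (hf_nonneg b θ' hθ')
        _ = f b θ' := one_mul _
    have hIb : (∫ θ' in Θ b, (∏ j, p b θ' (u j)) * f b θ') ≤ M := by
      calc (∫ θ' in Θ b, (∏ j, p b θ' (u j)) * f b θ')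
          ≤ ∫ θ' in Θ b, M * f b θ' := by
            apply setIntegral_mono_on hgInt ((hfaInta b).const_mul M) hmeasb
            intro θ' hθ'
            exact mul_le_mul_of_nonneg_right (hprod_ub θ' hθ') (hf_nonneg b θ' hθ')
        _ = M * ∫ θ' in Θ b, f b θ' := integral_const_mul M _
        _ = M := by rw [hf_int b, mul_one]
    -- lower bound on Θ a
    have hmeasa : MeasurableSet (Θ a) := (hΘ_open a).measurableSet
    have hgacont : ContinuousOn (fun θ'' => (∏ j, p a θ'' (u j)) * f a θ'') (Θ a) :=
      (continuousOn_finset_prod _ fun j _ => hC3_cont a (u j)).mul (hC2_cont a)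
    have hga_nonneg : ∀ θ'' ∈ Θ a, 0 ≤ (∏ j, p a θ'' (u j)) * f a θ'' := fun θ'' hθ'' =>
      mul_nonneg (Finset.prod_nonneg fun j _ => (hC3_pos a θ'' hθ'' (u j)).le)
        (hf_nonneg a θ'' hθ'')
    have hgaInt : IntegrableOn (fun θ'' => (∏ j, p a θ'' (u j)) * f a θ'') (Θ a) := by
      apply Integrable.mono' (hfaInta a) (hgacont.aestronglyMeasurable hmeasa)
      rw [ae_restrict_iff' hmeasa]
      apply ae_of_all
      intro θ'' hθ''
      rw [Real.norm_eq_abs, abs_of_nonneg (hga_nonneg θ'' hθ'')]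
      have hp1 : ∏ j, p a θ'' (u j) ≤ 1 :=
        Finset.prod_le_one (fun j _ => (hC3_pos a θ'' hθ'' (u j)).le)
          (fun j _ => hple1 a θ'' hθ'' (u j))
      calc (∏ j, p a θ'' (u j)) * f a θ'' ≤ 1 * f a θ'' :=
            mul_le_mul_of_nonneg_right hp1 (hf_nonneg a θ'' hθ'')
        _ = f a θ'' := one_mul _
    have hlb : ∀ θ'' ∈ B, Real.exp (k * (T - β)) ≤ ∏ j, p a θ'' (u j) := by
      intro θ'' hθ''B
      have hθ''Θ : θ'' ∈ Θ a := hBΘ hθ''B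
      obtain ⟨hr0, hr1⟩ := hp_dist a θ'' hθ''Θ
      have hrpos : ∀ v, 0 < p a θ'' v := hC3_pos a θ'' hθ''Θ
      have hclose : ∀ v, |sh v - p a θ'' v| ≤ η + τ := by
        intro v
        calc |sh v - p a θ'' v| ≤ |sh v - p a θ v| + |p a θ v - p a θ'' v| :=
              abs_sub_le _ _ _
          _ ≤ η + τ := add_le_add (hshq v) (by rw [abs_sub_comm]; exact hBp θ'' hθ''B v)
      have hrmin : ∀ v, qmin/2 ≤ p a θ'' v := by
        intro v
        have h1 := (abs_le.mp (hBp θ'' hθ''B v)).1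
        have h2 := hqmin_le v
        linarith
      have h := MapConsist.log_sum_ge sh (p a θ'') hsh0 hsh1 hrpos hr1
        (by positivity) (by positivity) hclose hrmin
      rw [hprodexp a θ'' hrpos]
      apply Real.exp_le_exp.mpr
      apply mul_le_mul_of_nonneg_left _ hk0.le
      rw [hβdef, hTdef]
      rw [← hndef] at h
      exact h
    have hIa : c * Real.exp (k*(T-β)) * V
        ≤ ∫ θ'' in Θ a, (∏ j, p a θ'' (u j)) * f a θ'' := by
      have h1 : (Real.exp (k*(T-β)) * c) * V ≤ ∫ θ'' in B, (∏ j, p a θ'' (u j)) * f a θ'' := by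
        rw [hVdef, mul_comm, ← measureReal_def, ← smul_eq_mul]
        apply setIntegral_ge_of_const_le hBmeas measure_closedBall_lt_top.ne
          _ (hgaInt.mono_set hBΘ)
        intro x hx
        have := mul_le_mul (hlb x hx) (hBf x hx) hc.le
          (Finset.prod_nonneg fun j _ => (hC3_pos a x (hBΘ hx) (u j)).le)
        exact this
      have hae : (0 : (Fin (d a) → ℝ) → ℝ)
          ≤ᵐ[volume.restrict (Θ a)] (fun θ'' => (∏ j, p a θ'' (u j)) * f a θ'') := by
        rw [Filter.EventuallyLE, ae_restrict_iff' hmeasa]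
        exact ae_of_all _ fun x hx => hga_nonneg x hx
      have h2 : ∫ θ'' in B, (∏ j, p a θ'' (u j)) * f a θ''
          ≤ ∫ θ'' in Θ a, (∏ j, p a θ'' (u j)) * f a θ'' :=
        setIntegral_mono_set hgaInt hae (HasSubset.Subset.eventuallyLE hBΘ)
      have h3 : c * Real.exp (k*(T-β)) * V = (Real.exp (k*(T-β)) * c) * V := by ring
      linarith
    -- final comparison
    have hπb1 : π b ≤ 1 := by
      rw [← hπ1]
      exact Finset.single_le_sum (fun x _ => hπ0 x) (Finset.mem_univ b)
    have hklarge := hKbig k hKk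
    have hexpcomp : Real.exp ((k:ℝ)*γ/2) * M ≤ Real.exp (k*(T-β)) := by
      rw [hMdef, ← Real.exp_add]
      apply Real.exp_le_exp.mpr
      have hkβ : (k:ℝ)*β ≤ (k:ℝ)*(γ/2) := mul_le_mul_of_nonneg_left hβγ hk0.le
      nlinarith
    have hfinal : π b * M < π a * (c * Real.exp (k*(T-β)) * V) := by
      have h1 : π b * M ≤ M := by nlinarith
      have h2 : M < R * (Real.exp ((k:ℝ)*γ/2) * M) := by nlinarith [Real.exp_pos ((k:ℝ)*γ/2)]
      have h3 : R * (Real.exp ((k:ℝ)*γ/2) * M) ≤ R * Real.exp (k*(T-β)) :=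
        mul_le_mul_of_nonneg_left hexpcomp hR.le
      have h4 : R * Real.exp (k*(T-β)) = π a * (c * Real.exp (k*(T-β)) * V) := by
        rw [hRdef]; ring
      linarith
    calc π b * (∫ θ' in Θ b, (∏ j, p b θ' (u j)) * f b θ')
        ≤ π b * M := mul_le_mul_of_nonneg_left hIb (hπ0 b)
      _ < π a * (c * Real.exp (k*(T-β)) * V) := hfinal
      _ ≤ π a * (∫ θ'' in Θ a, (∏ j, p a θ'' (u j)) * f a θ'') :=
          mul_le_mul_of_nonneg_left hIa (hC1 a).le
  refine (MapConsist.wrapper (p a θ) hq0 hq1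
    (fun k u => ∀ b : A, b ≠ a →
      π b * (∫ θ' in Θ b, (∏ j : Fin k, p b θ' (u j)) * f b θ')
        < π a * (∫ θ'' in Θ a, (∏ j : Fin k, p a θ'' (u j)) * f a θ''))
    η hη (max K 1) hdet).congr fun k => ?_
  refine Finset.sum_congr rfl fun u _ => ?_
  congr
end
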